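/- Let q be a prime number and l an integer with 2 ≤ l ≤ q, and let B = B(q,l). Then the characteristic polynomial of the real lq×lq matrix Bᵀ B equals (X − ql)·(X − q)^{l(q−1)}·X^{l−1}. Equivalently, Bᵀ (the biadjacency matrix of an (q,l)-biregular bipartite graph) has a simple singular value √(ql), l(q−1) singular values equal to √q, and l−1 singular values equal to 0. -/

import Mathlib

open Matrix Polynomial Kronecker

/-- The `q × q` cyclic-shift permutation matrix over `ℝ`:
`P i j = 1` iff `j ≡ i - 1 (mod q)`. -/
def cyclicShift (q : ℕ) : Matrix (Fin q) (Fin q) ℝ :=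
  Matrix.of fun i j => if (j : ZMod q) = (i : ZMod q) - 1 then 1 else 0

/-- The `q² × lq` array-code matrix `B(q,l)`, with `q` block-rows and `l` block-columns
of `q × q` blocks, whose `(i,j)` block (`0`-indexed) is `P^(i*j)`. -/
def arrayB (q l : ℕ) : Matrix (Fin q × Fin q) (Fin l × Fin q) ℝ :=
  Matrix.of fun r c => (cyclicShift q ^ ((r.1 : ℕ) * (c.1 : ℕ))) r.2 c.2

/-! ### Auxiliary: `Fin q` vs `ZMod q` -/

/-- The unique element of `Fin q` with a given value in `ZMod q`. -/
def zfin (q : ℕ) [NeZero q] (z : ZMod q) : Fin q := ⟨z.val, ZMod.val_lt z⟩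

lemma zfin_cast (q : ℕ) [NeZero q] (z : ZMod q) : ((zfin q z : ℕ) : ZMod q) = z :=
  ZMod.natCast_rightInverse z

lemma cast_eq_iff (q : ℕ) [NeZero q] (c : Fin q) (z : ZMod q) :
    ((c : ℕ) : ZMod q) = z ↔ c = zfin q z := by
  constructor
  · intro h
    have := congrArg ZMod.val h
    rw [ZMod.val_cast_of_lt c.2] at this
    exact Fin.ext this
  · rintro rfl; exact zfin_cast q z

lemma sum_zfin (q : ℕ) [NeZero q] (z : ZMod q) (f : Fin q → ℝ) :
    ∑ c : Fin q, (if ((c : ℕ) : ZMod q) = z then f c else 0) = f (zfin q z) := by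
  have : ∀ c : Fin q, (if ((c : ℕ) : ZMod q) = z then f c else 0)
      = if c = zfin q z then f c else 0 := by
    intro c; simp [cast_eq_iff]
  simp_rw [this]
  simp

lemma fin_cast_inj (q : ℕ) [NeZero q] (a b : Fin q) :
    ((a : ℕ) : ZMod q) = ((b : ℕ) : ZMod q) ↔ a = b := by
  constructor
  · intro h
    have := congrArg ZMod.val h
    rw [ZMod.val_cast_of_lt a.2, ZMod.val_cast_of_lt b.2] at this
    exact Fin.ext this
  · rintro rfl; rfl

/-! ### Entries of powers of the cyclic shift -/

lemma cyclicShift_pow (q : ℕ) [NeZero q] (m : ℕ) (a b : Fin q) :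
    (cyclicShift q ^ m) a b = if ((b : ℕ) : ZMod q) = ((a : ℕ) : ZMod q) - m then 1 else 0 := by
  induction m generalizing b with
  | zero =>
    simp only [pow_zero, Nat.cast_zero, sub_zero]
    rw [Matrix.one_apply]
    congr 1
    simp only [eq_iff_iff]
    rw [cast_eq_iff]
    constructor
    · rintro rfl
      exact Fin.ext (ZMod.val_cast_of_lt a.2).symm
    · rintro rfl
      exact Fin.ext ((ZMod.val_cast_of_lt a.2)).symm
  | succ m ih =>
    rw [pow_succ, Matrix.mul_apply]
    have : ∀ c : Fin q, (cyclicShift q ^ m) a c * cyclicShift q c b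
        = if ((c : ℕ) : ZMod q) = ((a : ℕ) : ZMod q) - m then
            (if ((b : ℕ) : ZMod q) = ((c : ℕ) : ZMod q) - 1 then (1:ℝ) else 0) else 0 := by
      intro c
      rw [ih c]
      by_cases h : ((c : ℕ) : ZMod q) = ((a : ℕ) : ZMod q) - m <;>
        simp [h, cyclicShift]
    simp_rw [this]
    rw [sum_zfin]
    rw [zfin_cast]
    push_cast
    ring_nf

/-! ### The Gram matrix `Bᵀ B` -/

def onesMat (n : ℕ) : Matrix (Fin n) (Fin n) ℝ := Matrix.of fun _ _ => 1

def offDiag (n : ℕ) : Matrix (Fin n) (Fin n) ℝ :=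
  Matrix.of fun i j => if i = j then 0 else 1

lemma BtB (q l : ℕ) (hq : q.Prime) (hlq : l ≤ q) [NeZero q] :
    (arrayB q l)ᵀ * arrayB q l
      = (q : ℝ) • 1 + Matrix.kroneckerMap (· * ·) (offDiag l) (onesMat q) := by
  haveI : Fact q.Prime := ⟨hq⟩
  ext ⟨j, a⟩ ⟨j', b⟩
  rw [Matrix.mul_apply]
  rw [Fintype.sum_prod_type]
  have inner : ∀ i : Fin q,
      ∑ c : Fin q, (arrayB q l)ᵀ (j, a) (i, c) * arrayB q l (i, c) (j', b)
        = if ((b : ℕ) : ZMod q) = ((a : ℕ) : ZMod q) + i * j - i * j' then 1 else 0 := by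
    intro i
    have step : ∀ c : Fin q, (arrayB q l)ᵀ (j, a) (i, c) * arrayB q l (i, c) (j', b)
        = if ((c : ℕ) : ZMod q) = ((a : ℕ) : ZMod q) + i * j then
            (if ((b : ℕ) : ZMod q) = ((c : ℕ) : ZMod q) - i * j' then (1:ℝ) else 0) else 0 := by
      intro c
      simp only [Matrix.transpose_apply, arrayB, Matrix.of_apply]
      rw [cyclicShift_pow, cyclicShift_pow]
      push_cast
      have hc : (((a : ℕ) : ZMod q) = ((c : ℕ) : ZMod q) - (i : ℕ) * (j : ℕ))
          ↔ ((c : ℕ) : ZMod q) = ((a : ℕ) : ZMod q) + (i : ℕ) * (j : ℕ) := by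
        constructor <;> intro h <;> [skip; skip] <;> · rw [h]; ring
      by_cases h : ((c : ℕ) : ZMod q) = ((a : ℕ) : ZMod q) + (i : ℕ) * (j : ℕ)
      · simp [hc, h]
      · simp [hc, h]
    simp_rw [step]
    rw [sum_zfin, zfin_cast]
  simp_rw [inner]
  by_cases hjj : j = j'
  · subst hjj
    have : ∀ i : Fin q,
        (if ((b : ℕ) : ZMod q) = ((a : ℕ) : ZMod q) + i * j - i * j then (1:ℝ) else 0)
          = if a = b then 1 else 0 := by
      intro i
      rw [add_sub_cancel_right]
      simp only [fin_cast_inj]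
      by_cases hab : a = b <;> simp [hab]
      exact fun h => hab h.symm
    simp_rw [this]
    simp only [Finset.sum_const, Finset.card_univ, Fintype.card_fin, nsmul_eq_mul]
    simp [Matrix.one_apply, offDiag, Prod.ext_iff, mul_comm]
  · have hu : ((j : ℕ) : ZMod q) - ((j' : ℕ) : ZMod q) ≠ 0 := by
      rw [sub_ne_zero]
      intro h
      apply hjj
      have := congrArg ZMod.val h
      rw [ZMod.val_cast_of_lt (lt_of_lt_of_le j.2 hlq),
        ZMod.val_cast_of_lt (lt_of_lt_of_le j'.2 hlq)] at this
      exact Fin.ext this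
    set u : ZMod q := ((j : ℕ) : ZMod q) - ((j' : ℕ) : ZMod q) with hudef
    have key : ∀ i : Fin q,
        (((b : ℕ) : ZMod q) = ((a : ℕ) : ZMod q) + i * j - i * j')
          ↔ ((i : ℕ) : ZMod q) = (((b : ℕ) : ZMod q) - ((a : ℕ) : ZMod q)) * u⁻¹ := by
      intro i
      rw [hudef]
      constructor
      · intro h
        rw [h, eq_mul_inv_iff_mul_eq₀ (by exact hu : ((j : ℕ) : ZMod q) - ((j' : ℕ) : ZMod q) ≠ 0)]
        ring
      · intro h
        have h2 : ((i : ℕ) : ZMod q) * (((j : ℕ) : ZMod q) - ((j' : ℕ) : ZMod q))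
            = ((b : ℕ) : ZMod q) - ((a : ℕ) : ZMod q) := by
          rw [h, inv_mul_cancel_right₀ (by exact hu : ((j : ℕ) : ZMod q) - ((j' : ℕ) : ZMod q) ≠ 0)]
        have := h2
        rw [mul_sub] at this
        linear_combination -this
    simp_rw [key]
    rw [sum_zfin (f := fun _ => (1:ℝ))]
    simp [Matrix.one_apply, offDiag, onesMat, Prod.ext_iff, hjj]

/-! ### The diagonalizing change of basis -/

section conj
variable (n : ℕ) [NeZero n]

def Smat : Matrix (Fin n) (Fin n) ℝ :=
  Matrix.of fun a j => if j = 0 then 1 else if a = j then 1 else if a = 0 then -1 else 0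

noncomputable def Tmat : Matrix (Fin n) (Fin n) ℝ :=
  Matrix.of fun i b => if i = 0 then (n:ℝ)⁻¹ else (if i = b then 1 else 0) - (n:ℝ)⁻¹

lemma hncast : ((n:ℝ)) ≠ 0 := Nat.cast_ne_zero.2 (NeZero.ne n)

lemma card_erase0 : (Finset.univ.erase (0 : Fin n)).card = n - 1 := by
  rw [Finset.card_erase_of_mem (Finset.mem_univ _), Finset.card_univ, Fintype.card_fin]

lemma sum_ind_erase0 (b : Fin n) :
    ∑ j ∈ Finset.univ.erase (0:Fin n), (if j = b then (1:ℝ) else 0)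
      = if b = 0 then 0 else 1 := by
  rw [Finset.sum_ite_eq']
  by_cases hb : b = 0 <;> simp [hb, Finset.mem_erase]

lemma Smat_colsum (j : Fin n) :
    ∑ a : Fin n, Smat n a j = if j = 0 then (n:ℝ) else 0 := by
  by_cases hj : j = 0
  · subst hj; simp [Smat]
  · rw [if_neg hj]
    have : ∀ a : Fin n, Smat n a j
        = (if a = j then (1:ℝ) else 0) + (if a = 0 then -1 else 0) := by
      intro a
      simp only [Smat, Matrix.of_apply, if_neg hj]
      by_cases h1 : a = j
      · subst h1; simp [hj]
      · by_cases h2 : a = 0 <;> simp [h1, h2, Ne.symm hj]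
    simp_rw [this]
    rw [Finset.sum_add_distrib]
    simp [Finset.sum_ite_eq' Finset.univ j fun _ => (1:ℝ),
      Finset.sum_ite_eq' Finset.univ (0:Fin n) fun _ => (-1:ℝ)]

lemma Smat_mul_Tmat : Smat n * Tmat n = 1 := by
  have hn := hncast n
  ext a b
  rw [Matrix.mul_apply, Matrix.one_apply,
    ← Finset.add_sum_erase Finset.univ _ (Finset.mem_univ (0:Fin n))]
  have t0 : Tmat n 0 b = (n:ℝ)⁻¹ := by simp [Tmat]
  have s0 : Smat n a 0 = 1 := by simp [Smat]
  by_cases ha : a = 0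
  · subst ha
    have hcong : ∀ j ∈ Finset.univ.erase (0:Fin n),
        Smat n 0 j * Tmat n j b = -(if j = b then (1:ℝ) else 0) + (n:ℝ)⁻¹ := by
      intro j hj
      have hj0 : j ≠ 0 := (Finset.mem_erase.1 hj).1
      simp only [Smat, Tmat, Matrix.of_apply, if_neg hj0, if_neg (Ne.symm hj0)]
      norm_num
      ring
    rw [Finset.sum_congr rfl hcong, Finset.sum_add_distrib, Finset.sum_neg_distrib,
      sum_ind_erase0, Finset.sum_const, card_erase0, t0, s0]
    by_cases hb : b = 0
    · subst hb
      simp only [if_pos rfl]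
      have h1 : 1 ≤ n := Nat.one_le_iff_ne_zero.2 (NeZero.ne n)
      rw [nsmul_eq_mul]
      push_cast [h1]
      field_simp
      ring
    · rw [if_neg hb, if_neg (Ne.symm hb)]
      have h1 : 1 ≤ n := Nat.one_le_iff_ne_zero.2 (NeZero.ne n)
      rw [nsmul_eq_mul]
      push_cast [h1]
      field_simp
      ring
  · have hcong : ∀ j ∈ Finset.univ.erase (0:Fin n),
        Smat n a j * Tmat n j b
          = (if j = a then ((if j = b then (1:ℝ) else 0) - (n:ℝ)⁻¹) else 0) := by
      intro j hj
      have hj0 : j ≠ 0 := (Finset.mem_erase.1 hj).1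
      simp only [Smat, Tmat, Matrix.of_apply, if_neg hj0]
      by_cases h1 : a = j
      · subst h1; simp [ha]
      · simp [h1, Ne.symm h1, ha]
    rw [Finset.sum_congr rfl hcong, Finset.sum_ite_eq' _ a, t0, s0]
    rw [if_pos (by simp [Finset.mem_erase, ha])]
    by_cases hb : a = b
    · subst hb; simp
    · simp [hb, Ne.symm hb]

lemma Tmat_mul_Smat : Tmat n * Smat n = 1 := by
  have hn := hncast n
  ext i b
  rw [Matrix.mul_apply, Matrix.one_apply]
  by_cases hi : i = 0
  · subst hi
    have hcong : ∀ a, Tmat n 0 a * Smat n a b = (n:ℝ)⁻¹ * Smat n a b := by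
      intro a; simp [Tmat]
    simp_rw [hcong]
    rw [← Finset.mul_sum, Smat_colsum]
    by_cases hb : b = 0
    · subst hb; simp [hn]
    · simp [hb, Ne.symm hb]
  · have hcong : ∀ a, Tmat n i a * Smat n a b
        = (if a = i then Smat n a b else 0) - (n:ℝ)⁻¹ * Smat n a b := by
      intro a
      simp only [Tmat, Matrix.of_apply, if_neg hi]
      by_cases h1 : i = a
      · subst h1; simp; ring
      · simp [h1, Ne.symm h1]
    simp_rw [hcong]
    rw [Finset.sum_sub_distrib, Finset.sum_ite_eq' Finset.univ i, ← Finset.mul_sum,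
      Smat_colsum]
    by_cases hb : b = 0
    · subst hb
      simp [Smat, hn, hi]
    · simp [hb, Smat, hi, Ne.symm hb, Ne.symm hi]

def Djvec : Fin n → ℝ := fun b => if b = 0 then (n:ℝ) else 0

def Dkvec : Fin n → ℝ := fun a => if a = 0 then (n:ℝ) - 1 else -1

lemma ones_mul_Smat : onesMat n * Smat n = Smat n * Matrix.diagonal (Djvec n) := by
  ext a j
  rw [Matrix.mul_apply, Matrix.mul_diagonal]
  have : ∀ b, onesMat n a b * Smat n b j = Smat n b j := by
    intro b; simp [onesMat]
  simp_rw [this]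
  rw [Smat_colsum]
  by_cases hj : j = 0 <;> simp [hj, Djvec, Smat]

lemma offdiag_mul_Smat :
    offDiag n * Smat n = Smat n * Matrix.diagonal (fun a => Dkvec n a) := by
  ext a j
  rw [Matrix.mul_apply, Matrix.mul_diagonal]
  have : ∀ b, offDiag n a b * Smat n b j
      = Smat n b j - (if b = a then Smat n b j else 0) := by
    intro b
    by_cases h : a = b
    · subst h; simp [offDiag]
    · simp [offDiag, h, Ne.symm h]
  simp_rw [this]
  rw [Finset.sum_sub_distrib, Finset.sum_ite_eq' Finset.univ a, Smat_colsum]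
  simp only [Finset.mem_univ, if_pos]
  by_cases hj : j = 0
  · subst hj; simp [Dkvec, Smat]
  · simp [hj, Dkvec]

end conj

/-! ### Characteristic polynomials under conjugation, and of diagonal matrices -/

lemma charpoly_conj_aux {m : Type*} [Fintype m] [DecidableEq m]
    (S T M D : Matrix m m ℝ) (hST : S * T = 1) (hM : M * S = S * D) :
    M.charpoly = D.charpoly := by
  have hMeq : M = S * D * T := by
    calc M = M * (S * T) := by rw [hST, mul_one]
    _ = (M * S) * T := by rw [mul_assoc]
    _ = S * D * T := by rw [hM]
  have hmapST : S.map (C : ℝ →+* ℝ[X]) * T.map (C : ℝ →+* ℝ[X]) = 1 := by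
    rw [← Matrix.map_mul, hST, Matrix.map_one _ (map_zero _) (map_one _)]
  have hchar : charmatrix M
      = S.map (C : ℝ →+* ℝ[X]) * charmatrix D * T.map (C : ℝ →+* ℝ[X]) := by
    unfold charmatrix
    rw [mul_sub, sub_mul]
    congr 1
    · rw [← (Matrix.scalar_commute (X : ℝ[X]) (Commute.all X) (S.map C)).eq, mul_assoc,
        hmapST, mul_one]
    · simp only [RingHom.mapMatrix_apply]
      rw [hMeq, Matrix.map_mul, Matrix.map_mul]
  have hdet : (S.map (C : ℝ →+* ℝ[X])).det * (T.map (C : ℝ →+* ℝ[X])).det = 1 := by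
    rw [← det_mul, hmapST, det_one]
  rw [Matrix.charpoly, Matrix.charpoly, hchar, det_mul, det_mul]
  calc (S.map (C : ℝ →+* ℝ[X])).det * (charmatrix D).det * (T.map (C : ℝ →+* ℝ[X])).det
      = (S.map (C : ℝ →+* ℝ[X])).det * (T.map (C : ℝ →+* ℝ[X])).det * (charmatrix D).det := by
        ring
    _ = (charmatrix D).det := by rw [hdet, one_mul]

lemma charpoly_diag {m : Type*} [Fintype m] [DecidableEq m] (d : m → ℝ) :
    (Matrix.diagonal d).charpoly = ∏ i, (X - C (d i)) := by
  have : charmatrix (Matrix.diagonal d) = Matrix.diagonal fun i => X - C (d i) := by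
    unfold charmatrix
    simp only [RingHom.mapMatrix_apply, Matrix.scalar_apply]
    rw [Matrix.diagonal_map (map_zero _), ← Matrix.diagonal_sub]
  rw [Matrix.charpoly, this, det_diagonal]

/-! ### Main theorem -/

theorem arrayB_charpoly_of_le (q l : ℕ) (hq : q.Prime) (hl : 2 ≤ l) (hlq : l ≤ q) :
    ((arrayB q l)ᵀ * arrayB q l).charpoly =
      (X - C ((q : ℝ) * l)) * (X - C (q : ℝ)) ^ (l * (q - 1)) * X ^ (l - 1) := by
  haveI : NeZero q := ⟨hq.pos.ne'⟩
  haveI : NeZero l := ⟨by omega⟩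
  have hST : (Smat l ⊗ₖ Smat q) * (Tmat l ⊗ₖ Tmat q) = 1 := by
    rw [← Matrix.mul_kronecker_mul, Smat_mul_Tmat, Smat_mul_Tmat, Matrix.one_kronecker_one]
  have hcomm : ((arrayB q l)ᵀ * arrayB q l) * (Smat l ⊗ₖ Smat q)
      = (Smat l ⊗ₖ Smat q) *
        ((q:ℝ) • 1 + (Matrix.diagonal (Dkvec l)) ⊗ₖ (Matrix.diagonal (Djvec q))) := by
    rw [BtB q l hq hlq, add_mul, mul_add, Matrix.smul_mul, Matrix.mul_smul, one_mul, mul_one]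
    congr 1
    show (offDiag l ⊗ₖ onesMat q) * (Smat l ⊗ₖ Smat q) = _
    rw [← Matrix.mul_kronecker_mul, offdiag_mul_Smat, ones_mul_Smat,
      Matrix.mul_kronecker_mul]
  rw [charpoly_conj_aux _ _ _ _ hST hcomm]
  have hdiagform : (q:ℝ) • (1 : Matrix (Fin l × Fin q) (Fin l × Fin q) ℝ)
        + (Matrix.diagonal (Dkvec l)) ⊗ₖ (Matrix.diagonal (Djvec q))
      = Matrix.diagonal (fun p : Fin l × Fin q => (q:ℝ) + Dkvec l p.1 * Djvec q p.2) := by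
    rw [Matrix.diagonal_kronecker_diagonal, ← Matrix.diagonal_one, ← Matrix.diagonal_smul,
      Matrix.diagonal_add]
    exact congrArg _ (funext fun p => by simp)
  rw [hdiagform, charpoly_diag, Fintype.prod_prod_type]
  have inner : ∀ a : Fin l, (∏ b : Fin q, (X - C ((q:ℝ) + Dkvec l a * Djvec q b)))
      = (X - C ((q:ℝ) + Dkvec l a * (q:ℝ))) * (X - C (q:ℝ)) ^ (q-1) := by
    intro a
    have hrest : ∀ b ∈ Finset.univ.erase (0:Fin q),
        (X - C ((q:ℝ) + Dkvec l a * Djvec q b)) = X - C (q:ℝ) := by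
      intro b hb
      have hb0 : b ≠ 0 := (Finset.mem_erase.1 hb).1
      simp [Djvec, hb0]
    rw [← Finset.mul_prod_erase Finset.univ _ (Finset.mem_univ (0 : Fin q)),
      Finset.prod_congr rfl hrest, Finset.prod_const, card_erase0]
    have h00 : Djvec q (0 : Fin q) = (q:ℝ) := by simp [Djvec]
    rw [h00]
  simp_rw [inner]
  rw [← Finset.mul_prod_erase Finset.univ _ (Finset.mem_univ (0 : Fin l))]
  have h0 : (X - C ((q:ℝ) + Dkvec l 0 * (q:ℝ))) * (X - C (q:ℝ)) ^ (q-1)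
      = (X - C ((q:ℝ) * l)) * (X - C (q:ℝ)) ^ (q-1) := by
    have : (q:ℝ) + Dkvec l 0 * (q:ℝ) = (q:ℝ) * l := by
      simp [Dkvec]; ring
    rw [this]
  have hrest : ∀ a ∈ Finset.univ.erase (0:Fin l),
      (X - C ((q:ℝ) + Dkvec l a * (q:ℝ))) * (X - C (q:ℝ)) ^ (q-1)
        = X * (X - C (q:ℝ)) ^ (q-1) := by
    intro a ha
    have ha0 : a ≠ 0 := (Finset.mem_erase.1 ha).1
    have : (q:ℝ) + Dkvec l a * (q:ℝ) = 0 := by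
      simp [Dkvec, ha0]
    rw [this]
    simp
  rw [Finset.prod_congr rfl hrest, Finset.prod_const, card_erase0, h0, mul_pow]
  have hl1 : l - 1 + 1 = l := by omega
  have hexp : l * (q-1) = (q-1) + (q-1)*(l-1) := by
    conv_lhs => rw [← hl1]
    ring
  rw [hexp, pow_add]
  ring
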